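/- arXiv:1711.07960 — 10 statements merged into one kernel-verified Lean document; each statement's English description precedes it below -/
import Mathlib

section
/- Let x ≥ 1 and β ≥ 2 be natural numbers, p ≥ 0 and ε > 0 and c ≥ 0 and t ≥ 0 real numbers, and set α = β^p. Suppose f : ℕ → ℝ is nonnegative, T : ℕ → ℝ satisfies T(x) = t and T(x·β^(k+1)) = α·T(x·β^k) + f(x·β^(k+1)) for every natural k, and f(x·β^k) ≤ c·β^(k·(p−ε))·t for every k ≥ 1. Then for every natural L, T(x·β^L) ≤ (1 + c/(β^ε − 1))·α^L·t. -/
theorem stmt_1 (x β : ℕ) (hx : 1 ≤ x) (hβ : 2 ≤ β) (p ε c t : ℝ)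
    (hp : 0 ≤ p) (hε : 0 < ε) (hc : 0 ≤ c) (ht : 0 ≤ t)
    (α : ℝ) (hα : α = (β : ℝ) ^ p)
    (f T : ℕ → ℝ) (hf : ∀ n : ℕ, 0 ≤ f n)
    (hbase : T x = t)
    (hrec : ∀ k : ℕ, T (x * β ^ (k + 1)) = α * T (x * β ^ k) + f (x * β ^ (k + 1)))
    (hbound : ∀ k : ℕ, 1 ≤ k → f (x * β ^ k) ≤ c * (β : ℝ) ^ ((k : ℝ) * (p - ε)) * t) :
    ∀ L : ℕ, T (x * β ^ L) ≤ (1 + c / ((β : ℝ) ^ ε - 1)) * α ^ L * t := by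
  have hβ1 : (1 : ℝ) < (β : ℝ) := by exact_mod_cast lt_of_lt_of_le one_lt_two hβ
  have hβ0 : (0 : ℝ) < (β : ℝ) := lt_trans one_pos hβ1
  set b : ℝ := (β : ℝ) ^ ε with hbdef
  have hb1 : 1 < b := Real.one_lt_rpow_iff_of_pos hβ0 |>.mpr (Or.inl ⟨hβ1, hε⟩)
  have hb0 : 0 < b := lt_trans one_pos hb1
  set r : ℝ := b⁻¹ with hrdef
  have hr0 : 0 < r := inv_pos.mpr hb0
  have hr1 : r < 1 := inv_lt_one_of_one_lt₀ hb1
  have hα0 : 0 ≤ α := by rw [hα]; exact Real.rpow_nonneg hβ0.le p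
  -- rewrite the f-bound
  have hfb : ∀ k : ℕ, 1 ≤ k → f (x * β ^ k) ≤ c * (α * r) ^ k * t := by
    intro k hk
    have h1 : (β : ℝ) ^ ((k : ℝ) * (p - ε)) = (α * r) ^ k := by
      rw [mul_comm (k : ℝ), Real.rpow_mul hβ0.le, Real.rpow_natCast]
      congr 1
      rw [Real.rpow_sub hβ0, div_eq_mul_inv, hα]
    have := hbound k hk
    rwa [h1] at this
  -- partial sums
  have hS : ∀ L : ℕ, ∑ i ∈ Finset.range L, r ^ (i + 1) ≤ 1 / (b - 1) := by
    intro L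
    have h1 : ∑ i ∈ Finset.range L, r ^ (i + 1) = r * ∑ i ∈ Finset.range L, r ^ i := by
      rw [Finset.mul_sum]; exact Finset.sum_congr rfl fun i _ => by ring
    rw [h1, geom_sum_eq hr1.ne]
    have hrL0 : 0 ≤ r ^ L := pow_nonneg hr0.le L
    have hrL1 : r ^ L ≤ 1 := pow_le_one₀ hr0.le hr1.le
    have e0 : (r ^ L - 1) / (r - 1) = (1 - r ^ L) / (1 - r) := by
      rw [← neg_div_neg_eq]; ring_nf
    rw [e0, mul_div_assoc', div_le_div_iff₀ (by linarith) (by linarith)]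
    have hrb : r * b = 1 := inv_mul_cancel₀ hb0.ne'
    nlinarith [mul_nonneg hrL0 (sub_nonneg.mpr hr1.le), mul_nonneg hrL0 hr0.le]
  have key : ∀ L : ℕ, T (x * β ^ L) ≤
      α ^ L * t * (1 + c * ∑ i ∈ Finset.range L, r ^ (i + 1)) := by
    intro L
    induction L with
    | zero => simp [hbase]
    | succ L ih =>
      rw [hrec L]
      have hb' := hfb (L + 1) (Nat.le_add_left 1 L)
      have h2 : α * T (x * β ^ L) ≤ α * (α ^ L * t * (1 + c * ∑ i ∈ Finset.range L, r ^ (i + 1))) :=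
        mul_le_mul_of_nonneg_left ih hα0
      calc α * T (x * β ^ L) + f (x * β ^ (L + 1))
          ≤ α * (α ^ L * t * (1 + c * ∑ i ∈ Finset.range L, r ^ (i + 1)))
            + c * (α * r) ^ (L + 1) * t := add_le_add h2 hb'
        _ = α ^ (L + 1) * t * (1 + c * ∑ i ∈ Finset.range (L + 1), r ^ (i + 1)) := by
            rw [Finset.sum_range_succ]; ring
  intro L
  have h1 := key L
  have h2 : α ^ L * t * (1 + c * ∑ i ∈ Finset.range L, r ^ (i + 1))
      ≤ α ^ L * t * (1 + c * (1 / (b - 1))) := by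
    apply mul_le_mul_of_nonneg_left _ (mul_nonneg (pow_nonneg hα0 L) ht)
    have := hS L
    nlinarith
  calc T (x * β ^ L) ≤ _ := h1
    _ ≤ α ^ L * t * (1 + c * (1 / (b - 1))) := h2
    _ = (1 + c / (b - 1)) * α ^ L * t := by ring
end

section
/- Let x ≥ 1 and β ≥ 2 be natural numbers, α ≥ 1 and t ≥ 0 real numbers, and 0 < c < 1 a real number. embedSuppose f : ℕ → ℝ is nonnegative, T : ℕ → ℝ satisfies T(x) = t and T(x·β^(k+1)) = α·T(x·β^k) + f(x·β^(k+1)) for every natural k, and the regularity condition α·f(x·β^k) ≤ c·f(x·β^(k+1)) holds for every natural k. Then for every natural L, T(x·β^L) ≤ α^L·t + f(x·β^L)/(1 − c). -/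
theorem stmt_2 (x β : ℕ) (hx : 1 ≤ x) (hβ : 2 ≤ β) (α t c : ℝ)
    (hα : 1 ≤ α) (ht : 0 ≤ t) (hc0 : 0 < c) (hc1 : c < 1)
    (f T : ℕ → ℝ) (hf : ∀ n : ℕ, 0 ≤ f n)
    (hbase : T x = t)
    (hrec : ∀ k : ℕ, T (x * β ^ (k + 1)) = α * T (x * β ^ k) + f (x * β ^ (k + 1)))
    (hreg : ∀ k : ℕ, α * f (x * β ^ k) ≤ c * f (x * β ^ (k + 1))) :
    ∀ L : ℕ, T (x * β ^ L) ≤ α ^ L * t + f (x * β ^ L) / (1 - c) := by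
  have h1c : (0:ℝ) < 1 - c := by linarith
  intro L
  induction L with
  | zero =>
    simp only [pow_zero, mul_one, one_mul]
    rw [hbase]
    have := div_nonneg (hf x) h1c.le
    linarith
  | succ L ih =>
    have hα0 : (0:ℝ) ≤ α := by linarith
    have h := hrec L
    rw [h]
    have step : α * T (x * β ^ L) ≤ α ^ (L+1) * t + α * f (x * β ^ L) / (1 - c) := by
      calc α * T (x * β ^ L) ≤ α * (α ^ L * t + f (x * β ^ L) / (1 - c)) :=
            mul_le_mul_of_nonneg_left ih hα0
        _ = α ^ (L+1) * t + α * f (x * β ^ L) / (1 - c) := by ring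
    have hr : α * f (x * β ^ L) / (1 - c) ≤ c * f (x * β ^ (L+1)) / (1 - c) :=
      (div_le_div_iff_of_pos_right h1c).mpr (hreg L)
    have key : c * f (x * β ^ (L+1)) / (1 - c) + f (x * β ^ (L+1))
        = f (x * β ^ (L+1)) / (1 - c) := by
      field_simp
      ring
    linarith [step, hr]
end

section
/- Let x ≥ 1 and β ≥ 2 be natural numbers, α ≥ 1, t > 0, and c₁, c₂ > 0 real numbers. Suppose f : ℕ → ℝ, T : ℕ → ℝ satisfies T(x) = t and T(x·β^(k+1)) = α·T(x·β^k) + f(x·β^(k+1)) for every natural k, and c₁·α^k·t ≤ f(x·β^k) ≤ c₂·α^k·t for every k ≥ 1. Then for every natural L ≥ 1, α^L·t·(1 + c₁·L) ≤ T(x·β^L) ≤ α^L·t·(1 + c₂·L). -/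
theorem stmt_3 (x β : ℕ) (hx : 1 ≤ x) (hβ : 2 ≤ β) (α t c₁ c₂ : ℝ)
    (hα : 1 ≤ α) (ht : 0 < t) (hc₁ : 0 < c₁) (hc₂ : 0 < c₂)
    (f T : ℕ → ℝ)
    (hbase : T x = t)
    (hrec : ∀ k : ℕ, T (x * β ^ (k + 1)) = α * T (x * β ^ k) + f (x * β ^ (k + 1)))
    (hbound : ∀ k : ℕ, 1 ≤ k →
      c₁ * α ^ k * t ≤ f (x * β ^ k) ∧ f (x * β ^ k) ≤ c₂ * α ^ k * t) :
    ∀ L : ℕ, 1 ≤ L →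
      α ^ L * t * (1 + c₁ * L) ≤ T (x * β ^ L) ∧
        T (x * β ^ L) ≤ α ^ L * t * (1 + c₂ * L) := by
  have hα0 : (0:ℝ) < α := lt_of_lt_of_le one_pos hα
  intro L
  induction L with
  | zero => intro h; omega
  | succ L ih =>
    intro _
    have hrecL := hrec L
    obtain ⟨hb1, hb2⟩ := hbound (L + 1) (by omega)
    have hp : (0:ℝ) < α ^ L := pow_pos hα0 L
    have hps : α ^ (L + 1) = α * α ^ L := by ring
    by_cases hL : 1 ≤ L
    · obtain ⟨ih1, ih2⟩ := ih hL
      rw [hrecL]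
      constructor
      · push_cast [hps] at hb1 ⊢; nlinarith
      · push_cast [hps] at hb2 ⊢; nlinarith
    · have hL0 : L = 0 := by omega
      subst hL0
      simp only [pow_zero, mul_one] at hrecL
      rw [hrecL, hbase]
      constructor
      · push_cast at hb1 ⊢; nlinarith
      · push_cast at hb2 ⊢; nlinarith
end

section
/- Let x ≥ 1 and β ≥ 2 be natural numbers, α ≥ 1, γ > 0, and t ≥ 0 real numbers with α > γ. Suppose f : ℕ → ℝ is nonnegative, T : ℕ → ℝ satisfies T(x) = t and T(x·β^(k+1)) = α·T(x·β^k) + f(x·β^(k+1)) for every natural k, and γ·f(x·β^k) ≤ f(x·β^(k+1)) for every natural k. Then for every natural L ≥ 1, T(x·β^L) ≤ α^L·t + f(x·β^L)·(α/γ)^L/((α/γ) − 1). -/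
theorem stmt_4 (x β : ℕ) (hx : 1 ≤ x) (hβ : 2 ≤ β) (α γ t : ℝ)
    (hα : 1 ≤ α) (hγ : 0 < γ) (ht : 0 ≤ t) (hαγ : γ < α)
    (f T : ℕ → ℝ) (hf : ∀ n : ℕ, 0 ≤ f n)
    (hbase : T x = t)
    (hrec : ∀ k : ℕ, T (x * β ^ (k + 1)) = α * T (x * β ^ k) + f (x * β ^ (k + 1)))
    (hgrow : ∀ k : ℕ, γ * f (x * β ^ k) ≤ f (x * β ^ (k + 1))) :
    ∀ L : ℕ, 1 ≤ L →
      T (x * β ^ L) ≤ α ^ L * t + f (x * β ^ L) * (α / γ) ^ L / (α / γ - 1) := by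
  set r : ℝ := α / γ with hrdef
  have hr : 1 < r := (one_lt_div hγ).mpr hαγ
  have hr1 : 0 < r - 1 := sub_pos.mpr hr
  have hα0 : (0:ℝ) ≤ α := le_trans zero_le_one hα
  have key : ∀ L : ℕ,
      T (x * β ^ L) * (r - 1) ≤ α ^ L * t * (r - 1) + f (x * β ^ L) * (r ^ L - 1) := by
    intro L
    induction L with
    | zero => simp [hbase]
    | succ L ih =>
      rw [hrec L]
      have h1 : α * f (x * β ^ L) ≤ r * f (x * β ^ (L + 1)) := by
        have hg := hgrow L
        have : f (x * β ^ L) ≤ f (x * β ^ (L + 1)) / γ := (le_div_iff₀' hγ).mpr hg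
        calc α * f (x * β ^ L) ≤ α * (f (x * β ^ (L + 1)) / γ) :=
              mul_le_mul_of_nonneg_left this hα0
          _ = r * f (x * β ^ (L + 1)) := by rw [hrdef]; ring
      have hrL : (1:ℝ) ≤ r ^ L := one_le_pow₀ hr.le
      have hf1 := hf (x * β ^ (L + 1))
      have h2 : α * (T (x * β ^ L) * (r - 1)) ≤
          α * (α ^ L * t * (r - 1) + f (x * β ^ L) * (r ^ L - 1)) :=
        mul_le_mul_of_nonneg_left ih hα0
      have h3 : (r * f (x * β ^ (L + 1)) - α * f (x * β ^ L)) * (r ^ L - 1) ≥ 0 :=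
        mul_nonneg (by linarith) (by linarith)
      have hpow : r ^ (L + 1) = r * r ^ L := pow_succ' r L
      rw [pow_succ α L, pow_succ r L]
      nlinarith [h2, h3, hf1]
  intro L hL
  have hK := key L
  have hf0 := hf (x * β ^ L)
  have h4 : T (x * β ^ L) * (r - 1) ≤ α ^ L * t * (r - 1) + f (x * β ^ L) * r ^ L := by
    nlinarith [hK, hf0]
  calc T (x * β ^ L) ≤ (α ^ L * t * (r - 1) + f (x * β ^ L) * r ^ L) / (r - 1) :=
      (le_div_iff₀ hr1).mpr h4
    _ = α ^ L * t + f (x * β ^ L) * r ^ L / (r - 1) := by field_simp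
end

section
/- Let x ≥ 1 and β ≥ 2 be natural numbers, α ≥ 1, γ > 0, and t ≥ 0 real numbers with α < γ. Suppose f : ℕ → ℝ is nonnegative, T : ℕ → ℝ satisfies T(x) = t and T(x·β^(k+1)) = α·T(x·β^k) + f(x·β^(k+1)) for every natural k, and γ·f(x·β^k) ≤ f(x·β^(k+1)) for every natural k. Then for every natural L, T(x·β^L) ≤ α^L·t + f(x·β^L)/(1 − α/γ). -/
theorem stmt_5 (x β : ℕ) (hx : 1 ≤ x) (hβ : 2 ≤ β) (α γ t : ℝ)
    (hα : 1 ≤ α) (hγ : 0 < γ) (ht : 0 ≤ t) (hαγ : α < γ)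
    (f T : ℕ → ℝ) (hf : ∀ n : ℕ, 0 ≤ f n)
    (hbase : T x = t)
    (hrec : ∀ k : ℕ, T (x * β ^ (k + 1)) = α * T (x * β ^ k) + f (x * β ^ (k + 1)))
    (hgrow : ∀ k : ℕ, γ * f (x * β ^ k) ≤ f (x * β ^ (k + 1))) :
    ∀ L : ℕ, T (x * β ^ L) ≤ α ^ L * t + f (x * β ^ L) / (1 - α / γ) := by
  have hαpos : (0:ℝ) < α := lt_of_lt_of_le one_pos hα
  have hden : 0 < 1 - α / γ := by
    have : α / γ < 1 := (div_lt_one hγ).mpr hαγ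
    linarith
  intro L
  induction L with
  | zero =>
    simp only [pow_zero, mul_one, one_mul, hbase]
    have := div_nonneg (hf x) hden.le
    linarith
  | succ L ih =>
    rw [hrec L]
    have h1 : α * T (x * β ^ L) ≤ α * (α ^ L * t + f (x * β ^ L) / (1 - α / γ)) :=
      mul_le_mul_of_nonneg_left ih hαpos.le
    have h2 : f (x * β ^ L) ≤ f (x * β ^ (L + 1)) / γ :=
      (le_div_iff₀ hγ).mpr (by linarith [hgrow L, mul_comm γ (f (x * β ^ L))])
    have h3 : α * (f (x * β ^ L) / (1 - α / γ)) ≤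
        α / γ * (f (x * β ^ (L + 1)) / (1 - α / γ)) := by
      have h4 : α * f (x * β ^ L) ≤ α / γ * f (x * β ^ (L + 1)) := by
        rw [div_mul_eq_mul_div, le_div_iff₀ hγ]
        nlinarith [hgrow L]
      calc α * (f (x * β ^ L) / (1 - α / γ))
          = (α * f (x * β ^ L)) / (1 - α / γ) := by ring
        _ ≤ (α / γ * f (x * β ^ (L + 1))) / (1 - α / γ) := by gcongr
        _ = α / γ * (f (x * β ^ (L + 1)) / (1 - α / γ)) := by ring
    have key : α / γ * (f (x * β ^ (L + 1)) / (1 - α / γ)) + f (x * β ^ (L + 1))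
        = f (x * β ^ (L + 1)) / (1 - α / γ) := by
      have hD : (1 - α / γ) * (f (x * β ^ (L + 1)) / (1 - α / γ)) = f (x * β ^ (L + 1)) := by
        rw [mul_comm]; exact div_mul_cancel₀ _ hden.ne'
      nlinarith [hD]
    calc α * T (x * β ^ L) + f (x * β ^ (L + 1))
        ≤ α * (α ^ L * t) + α * (f (x * β ^ L) / (1 - α / γ)) + f (x * β ^ (L + 1)) := by
          nlinarith [h1]
      _ ≤ α * (α ^ L * t) + α / γ * (f (x * β ^ (L + 1)) / (1 - α / γ)) + f (x * β ^ (L + 1)) := by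
          linarith [h3]
      _ = α ^ (L + 1) * t + (α / γ * (f (x * β ^ (L + 1)) / (1 - α / γ)) + f (x * β ^ (L + 1))) := by
          ring
      _ = α ^ (L + 1) * t + f (x * β ^ (L + 1)) / (1 - α / γ) := by rw [key]
end

section
/- Let G be a connected simple graph on a finite vertex type V, let X and T be finite types, and let ξ : X → V and τ : T → V be arbitrary maps. Define the simple graph G′ on V ⊕ X ⊕ T whose edges are: all edges of G between vertices of V; an edge between each x ∈ X and ξ(x); and an edge between each t ∈ T and τ(t) (no other edges). Define G_X on V ⊕ X and G_T on V ⊕ T analogously (attaching only the X-pendants, respectively only the T-pendants). For a finite simple graph H on vertex set U, write WI(H) = ∑_{u∈U} ∑_{v∈U} d_H(u,v), the sum of shortest-path distances over all ordered pairs. Then WI(G′) − WI(G_X) − WI(G_T) + WI(G) = 2·∑_{x∈X} ∑_{t∈T} (d_G(ξ(x), τ(t)) + 2). -/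
/-- The graph obtained from `G` by attaching, for every `w : W`, a pendant
vertex `w` joined by an edge to `f w`. -/
def SimpleGraph.addPendants {V W : Type*} (G : SimpleGraph V) (f : W → V) :
    SimpleGraph (V ⊕ W) :=
  SimpleGraph.fromRel (fun a b =>
    match a, b with
    | Sum.inl u, Sum.inl v => G.Adj u v
    | Sum.inl v, Sum.inr w => v = f w
    | _, _ => False)

/-- The Wiener index of a finite graph: the sum of the shortest-path
distances over all ordered pairs of vertices. -/
noncomputable def SimpleGraph.wienerIndex {U : Type*} [Fintype U] (H : SimpleGraph U) : ℕ :=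
  ∑ u : U, ∑ v : U, H.dist u v

namespace AP

open SimpleGraph

variable {V W : Type*} (G : SimpleGraph V) (f : W → V)

open Classical in
/-- The claimed distance function on the pendant graph. -/
noncomputable def D (a b : V ⊕ W) : ℕ :=
  match a, b with
  | Sum.inl u, Sum.inl v => G.dist u v
  | Sum.inl u, Sum.inr w => G.dist u (f w) + 1
  | Sum.inr w, Sum.inl v => G.dist (f w) v + 1
  | Sum.inr w, Sum.inr w' => if w = w' then 0 else G.dist (f w) (f w') + 2

variable {G f}

lemma adj_inl_inl {u v : V} : (G.addPendants f).Adj (Sum.inl u) (Sum.inl v) ↔ G.Adj u v := by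
  constructor
  · rintro ⟨-, h | h⟩
    · exact h
    · exact h.symm
  · intro h
    exact ⟨by simpa using h.ne, Or.inl h⟩

lemma adj_inl_inr {v : V} {w : W} :
    (G.addPendants f).Adj (Sum.inl v) (Sum.inr w) ↔ v = f w := by
  constructor
  · rintro ⟨-, h | h⟩
    · exact h
    · exact h.elim
  · intro h
    exact ⟨by simp, Or.inl h⟩

lemma adj_inr_inl {v : V} {w : W} :
    (G.addPendants f).Adj (Sum.inr w) (Sum.inl v) ↔ v = f w := by
  rw [SimpleGraph.adj_comm]; exact adj_inl_inr

lemma not_adj_inr_inr {w w' : W} : ¬ (G.addPendants f).Adj (Sum.inr w) (Sum.inr w') := by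
  rintro ⟨-, h | h⟩ <;> exact h

lemma D_self (a : V ⊕ W) : D G f a a = 0 := by
  cases a <;> simp [D]

/-- Key step: `D` decreases by at most 1 along an edge. -/
lemma D_step (hG : G.Connected) {a b : V ⊕ W} (hab : (G.addPendants f).Adj a b)
    (c : V ⊕ W) : D G f a c ≤ D G f b c + 1 := by
  classical
  have tri : ∀ u v w : V, G.dist u w ≤ G.dist u v + G.dist v w := fun u v w =>
    hG.dist_triangle
  have hd1 : ∀ {u v : V}, G.Adj u v → G.dist u v ≤ 1 := fun h => by
    rw [SimpleGraph.dist_eq_one_iff_adj.2 h]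
  cases a with
  | inl u =>
    cases b with
    | inl v =>
      have huv : G.Adj u v := adj_inl_inl.1 hab
      cases c with
      | inl z =>
        simp only [D]
        calc G.dist u z ≤ G.dist u v + G.dist v z := tri _ _ _
          _ ≤ 1 + G.dist v z := by gcongr; exact hd1 huv
          _ = G.dist v z + 1 := by omega
      | inr w =>
        simp only [D]
        have : G.dist u (f w) ≤ G.dist u v + G.dist v (f w) := tri _ _ _
        have := hd1 huv
        omega
    | inr w =>
      have huw : u = f w := adj_inl_inr.1 hab
      subst huw
      cases c with
      | inl z => simp only [D]; omega
      | inr w' =>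
        simp only [D]
        by_cases h : w = w'
        · subst h
          rw [if_pos rfl]
          simp [SimpleGraph.dist_self]
        · rw [if_neg h]
          omega
  | inr w =>
    cases b with
    | inl v =>
      have hvw : v = f w := adj_inr_inl.1 hab
      subst hvw
      cases c with
      | inl z => simp only [D]; omega
      | inr w' =>
        simp only [D]
        by_cases h : w = w'
        · subst h
          rw [if_pos rfl]
          omega
        · rw [if_neg h]
    | inr w' => exact absurd hab not_adj_inr_inr

lemma D_le_length (hG : G.Connected) {a b : V ⊕ W} (p : (G.addPendants f).Walk a b) :
    D G f a b ≤ p.length := by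
  induction p with
  | nil => simp [D_self]
  | @cons a b c h q ih =>
    have := D_step hG h c
    simp only [SimpleGraph.Walk.length_cons]
    omega

/-- The homomorphism from `G` into the pendant graph. -/
def homInl : G →g (G.addPendants f) where
  toFun := Sum.inl
  map_rel' := fun h => adj_inl_inl.2 h

lemma exists_walk (hG : G.Connected) (a b : V ⊕ W) :
    ∃ p : (G.addPendants f).Walk a b, p.length = D G f a b := by
  classical
  cases a with
  | inl u =>
    cases b with
    | inl v =>
      obtain ⟨p, hp⟩ := hG.exists_walk_length_eq_dist u v
      exact ⟨p.map homInl, (SimpleGraph.Walk.length_map _ _).trans hp⟩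
    | inr w =>
      obtain ⟨p, hp⟩ := hG.exists_walk_length_eq_dist u (f w)
      refine ⟨(p.map homInl).concat (adj_inl_inr.2 rfl), ?_⟩
      simp [SimpleGraph.Walk.length_concat, SimpleGraph.Walk.length_map, D, hp]
      exact (SimpleGraph.Walk.length_concat _ _).trans (congrArg (· + 1) ((SimpleGraph.Walk.length_map _ _).trans hp))
  | inr w =>
    cases b with
    | inl v =>
      obtain ⟨p, hp⟩ := hG.exists_walk_length_eq_dist (f w) v
      refine ⟨SimpleGraph.Walk.cons (adj_inr_inl.2 rfl) (p.map homInl), ?_⟩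
      simp [SimpleGraph.Walk.length_map, D, hp]
      exact (SimpleGraph.Walk.length_cons _ _).trans (congrArg (· + 1) ((SimpleGraph.Walk.length_map _ _).trans hp))
    | inr w' =>
      by_cases h : w = w'
      · subst h
        exact ⟨SimpleGraph.Walk.nil, by simp [D_self]⟩
      · obtain ⟨p, hp⟩ := hG.exists_walk_length_eq_dist (f w) (f w')
        refine ⟨SimpleGraph.Walk.cons (adj_inr_inl.2 rfl)
          ((p.map homInl).concat (adj_inl_inr.2 rfl)), ?_⟩
        simp only [SimpleGraph.Walk.length_cons, SimpleGraph.Walk.length_concat,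
          SimpleGraph.Walk.length_map, D, if_neg h, hp]
        exact (SimpleGraph.Walk.length_cons _ _).trans (congrArg (· + 1)
          ((SimpleGraph.Walk.length_concat _ _).trans (congrArg (· + 1) ((SimpleGraph.Walk.length_map _ _).trans hp))))

lemma dist_eq (hG : G.Connected) (a b : V ⊕ W) :
    (G.addPendants f).dist a b = D G f a b := by
  obtain ⟨p, hp⟩ := exists_walk hG a b
  refine le_antisymm (hp ▸ SimpleGraph.dist_le p) ?_
  obtain ⟨q, hq⟩ := SimpleGraph.Reachable.exists_walk_length_eq_dist ⟨p⟩
  exact hq ▸ D_le_length hG q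

lemma wi (hG : G.Connected) [Fintype V] [Fintype W] :
    (G.addPendants f).wienerIndex
      = G.wienerIndex + (∑ w : W, ∑ u : V, (G.dist u (f w) + 1))
        + (∑ w : W, ∑ u : V, (G.dist (f w) u + 1))
        + ∑ w : W, ∑ w' : W, D G f (Sum.inr w) (Sum.inr w') := by
  classical
  have key : ∀ a b, (G.addPendants f).dist a b = D G f a b := dist_eq hG
  simp only [SimpleGraph.wienerIndex, key, Fintype.sum_sum_type]
  have h1 : ∀ u : V, ∑ w : W, D G f (Sum.inl u) (Sum.inr w) = ∑ w : W, (G.dist u (f w) + 1) := by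
    intro u; rfl
  simp only [D, Finset.sum_add_distrib]
  rw [Finset.sum_comm (f := fun (u : V) (w : W) => G.dist u (f w)),
    Finset.sum_comm (f := fun (_ : V) (_ : W) => 1)]
  omega

end AP

theorem stmt_8 {V X T : Type*} [Fintype V] [Fintype X] [Fintype T]
    (G : SimpleGraph V) (hG : G.Connected) (ξ : X → V) (τ : T → V) :
    ((G.addPendants (Sum.elim ξ τ)).wienerIndex : ℤ)
        - (G.addPendants ξ).wienerIndex - (G.addPendants τ).wienerIndex
        + G.wienerIndex
      = 2 * ∑ x : X, ∑ t : T, ((G.dist (ξ x) (τ t) : ℤ) + 2) := by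
  classical
  rw [AP.wi hG (f := Sum.elim ξ τ), AP.wi hG (f := ξ), AP.wi hG (f := τ)]
  -- split the sums over X ⊕ T
  simp only [Fintype.sum_sum_type, Sum.elim_inl, Sum.elim_inr]
  push_cast
  have hXX : ∀ x x' : X,
      AP.D G (Sum.elim ξ τ) (Sum.inr (Sum.inl x)) (Sum.inr (Sum.inl x'))
        = AP.D G ξ (Sum.inr x) (Sum.inr x') := by
    intro x x'
    simp only [AP.D, Sum.elim_inl, Sum.inl.injEq]
  have hTT : ∀ t t' : T,
      AP.D G (Sum.elim ξ τ) (Sum.inr (Sum.inr t)) (Sum.inr (Sum.inr t'))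
        = AP.D G τ (Sum.inr t) (Sum.inr t') := by
    intro t t'
    simp only [AP.D, Sum.elim_inr, Sum.inr.injEq]
  have hXT : ∀ (x : X) (t : T),
      AP.D G (Sum.elim ξ τ) (Sum.inr (Sum.inl x)) (Sum.inr (Sum.inr t))
        = G.dist (ξ x) (τ t) + 2 := by
    intro x t
    simp [AP.D]
  have hTX : ∀ (t : T) (x : X),
      AP.D G (Sum.elim ξ τ) (Sum.inr (Sum.inr t)) (Sum.inr (Sum.inl x))
        = G.dist (ξ x) (τ t) + 2 := by
    intro t x
    simp [AP.D, SimpleGraph.dist_comm]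
  simp only [hXX, hTT, hXT, hTX]
  push_cast
  simp only [Finset.sum_add_distrib]
  rw [Finset.sum_comm (f := fun (t : T) (x : X) => (G.dist (ξ x) (τ t) : ℤ)),
    Finset.sum_comm (f := fun (_ : T) (_ : X) => (2 : ℤ))]
  ring
end

section
/- Let G be a simple graph on a vertex type V and let k ≥ 1 be a natural number. Define the simple graph H on V × Fin (k+1) where (u,i) and (v,j) are adjacent if and only if |i − j| = 1 and (u = v or u and v are adjacent in G). Then for all u, v ∈ V, there exists a walk of length exactly k from (u,0) to (v,k) in H if and only if edist_G(u,v) ≤ k, where edist_G denotes the shortest-path distance of G in ℕ∞ (∞ for unreachable pairs). -/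
/-- The plain layered graph: `(u,i)` and `(v,j)` are adjacent iff the layers
`i` and `j` differ by exactly one and either `u = v` or `u` and `v` are
adjacent in `G`. -/
def plainLayeredGraph {V : Type*} (G : SimpleGraph V) (k : ℕ) :
    SimpleGraph (V × Fin (k + 1)) :=
  SimpleGraph.fromRel (fun a b =>
    (b.2 : ℕ) = (a.2 : ℕ) + 1 ∧ (a.1 = b.1 ∨ G.Adj a.1 b.1))

lemma plg_step {V : Type*} (G : SimpleGraph V) (k : ℕ) (a b : V)
    (i j : Fin (k + 1)) (hij : (j : ℕ) = (i : ℕ) + 1)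
    (h : a = b ∨ G.Adj a b) : (plainLayeredGraph G k).Adj (a, i) (b, j) := by
  rw [plainLayeredGraph, SimpleGraph.fromRel_adj]
  refine ⟨?_, Or.inl ⟨hij, h⟩⟩
  intro he
  have : i = j := congrArg Prod.snd he
  omega

lemma plg_adj_cases {V : Type*} {G : SimpleGraph V} {k : ℕ}
    {x y : V × Fin (k + 1)} (h : (plainLayeredGraph G k).Adj x y) :
    ((y.2 : ℕ) = (x.2 : ℕ) + 1 ∨ (x.2 : ℕ) = (y.2 : ℕ) + 1) ∧
      (x.1 = y.1 ∨ G.Adj x.1 y.1) := by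
  rw [plainLayeredGraph, SimpleGraph.fromRel_adj] at h
  rcases h.2 with ⟨h1, h2⟩ | ⟨h1, h2⟩
  · exact ⟨Or.inl h1, h2⟩
  · refine ⟨Or.inr h1, ?_⟩
    rcases h2 with h2 | h2
    · exact Or.inl h2.symm
    · exact Or.inr h2.symm

lemma plg_bound {V : Type*} {G : SimpleGraph V} {k : ℕ}
    {x y : V × Fin (k + 1)} (w : (plainLayeredGraph G k).Walk x y) :
    (y.2 : ℕ) ≤ (x.2 : ℕ) + w.length ∧ (x.2 : ℕ) ≤ (y.2 : ℕ) + w.length := by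
  induction w with
  | nil => simp
  | cons h p ih =>
    have h1 := (plg_adj_cases h).1
    simp only [SimpleGraph.Walk.length_cons]
    omega

lemma plg_project {V : Type*} {G : SimpleGraph V} {k : ℕ} :
    ∀ {x y : V × Fin (k + 1)} (w : (plainLayeredGraph G k).Walk x y),
    (y.2 : ℕ) = (x.2 : ℕ) + w.length →
    ∃ p : G.Walk x.1 y.1, p.length ≤ w.length := by
  intro x y w
  induction w with
  | nil => exact fun _ => ⟨SimpleGraph.Walk.nil, by simp⟩
  | @cons a c b h p ih =>
    intro hlen
    simp only [SimpleGraph.Walk.length_cons] at hlen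
    obtain ⟨hdir, hrel⟩ := plg_adj_cases h
    rcases hdir with hdir | hdir
    · have hrec : (b.2 : ℕ) = (c.2 : ℕ) + p.length := by omega
      obtain ⟨q, hq⟩ := ih hrec
      rcases hrel with he | ha
      · exact ⟨q.copy he.symm rfl, by
          simp only [SimpleGraph.Walk.length_copy, SimpleGraph.Walk.length_cons]
          omega⟩
      · exact ⟨SimpleGraph.Walk.cons ha q, by
          simp only [SimpleGraph.Walk.length_cons]; omega⟩
    · have := plg_bound p
      omega

lemma plg_up {V : Type*} (G : SimpleGraph V) (k : ℕ) {a b : V}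
    (p : G.Walk a b) :
    ∀ (i j : Fin (k + 1)), (j : ℕ) = (i : ℕ) + p.length →
    ∃ w : (plainLayeredGraph G k).Walk (a, i) (b, j), w.length = p.length := by
  induction p with
  | nil =>
    intro i j hij
    have : i = j := by simp at hij; omega
    subst this
    exact ⟨SimpleGraph.Walk.nil, rfl⟩
  | @cons a c b h p ih =>
    intro i j hij
    simp only [SimpleGraph.Walk.length_cons] at hij ⊢
    have hi1 : (i : ℕ) + 1 < k + 1 := by omega
    set i' : Fin (k + 1) := ⟨(i : ℕ) + 1, hi1⟩
    obtain ⟨w, hw⟩ := ih i' j (by simp [i']; omega)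
    exact ⟨SimpleGraph.Walk.cons (plg_step G k a c i i' rfl (Or.inr h)) w,
      by simp [hw]⟩

lemma plg_lazy {V : Type*} (G : SimpleGraph V) (k : ℕ) (b : V) :
    ∀ (n : ℕ) (i j : Fin (k + 1)), (j : ℕ) = (i : ℕ) + n →
    ∃ w : (plainLayeredGraph G k).Walk (b, i) (b, j), w.length = n := by
  intro n
  induction n with
  | zero =>
    intro i j hij
    have : i = j := by omega
    subst this
    exact ⟨SimpleGraph.Walk.nil, rfl⟩
  | succ n ih =>
    intro i j hij
    have hi1 : (i : ℕ) + 1 < k + 1 := by omega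
    set i' : Fin (k + 1) := ⟨(i : ℕ) + 1, hi1⟩
    obtain ⟨w, hw⟩ := ih i' j (by simp [i']; omega)
    exact ⟨SimpleGraph.Walk.cons (plg_step G k b b i i' rfl (Or.inl rfl)) w,
      by simp [hw]⟩

theorem stmt_10 {V : Type*} (G : SimpleGraph V) (k : ℕ) (hk : 1 ≤ k)
    (u v : V) :
    (∃ w : (plainLayeredGraph G k).Walk (u, 0) (v, Fin.last k),
        w.length = k) ↔ G.edist u v ≤ (k : ℕ∞) := by
  constructor
  · rintro ⟨w, hw⟩
    obtain ⟨p, hp⟩ := plg_project w (by simp [hw])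
    calc G.edist u v ≤ p.length := SimpleGraph.edist_le p
      _ ≤ (k : ℕ∞) := by
        rw [hw] at hp
        exact_mod_cast hp
  · intro h
    have hne : G.edist u v ≠ ⊤ := fun ht => by simp [ht] at h
    obtain ⟨p, hp⟩ :=
      (SimpleGraph.reachable_of_edist_ne_top hne).exists_walk_length_eq_edist
    have hpk : p.length ≤ k := by
      have := hp ▸ h
      exact_mod_cast this
    obtain ⟨w1, hw1⟩ := plg_up G k p 0 ⟨p.length, by omega⟩ (by simp)
    obtain ⟨w2, hw2⟩ := plg_lazy G k v (k - p.length)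
      ⟨p.length, by omega⟩ (Fin.last k) (by simp [Fin.last]; omega)
    exact ⟨w1.append w2, by simp [hw1, hw2]; omega⟩
end

section
/- Let G be a simple graph on a vertex type V and let s, t ∈ V with s ≠ t and s and t not adjacent in G. Let G′ be the graph G with the edge {s,t} added. Then the minimum length of a cycle in G′ containing the edge {s,t} equals edist_G(s, t) + 1, where edist denotes shortest-path distance in ℕ∞ (∞ for unreachable pairs), the minimum cycle length is the infimum in ℕ∞ over lengths of cycles of G′ that contain the edge {s,t} (taking value ∞ if no such cycle exists), and ∞ + 1 = ∞. -/
/-- The minimum length of a cycle of `G` whose edge set contains `e`,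
as an infimum in `ℕ∞` (so `⊤` if no such cycle exists). -/
noncomputable def minCycleLengthThroughEdge {V : Type*} (G : SimpleGraph V)
    (e : Sym2 V) : ℕ∞ :=
  ⨅ (a : V) (w : G.Walk a a) (_ : w.IsCycle ∧ e ∈ w.edges), (w.length : ℕ∞)

theorem stmt_13 {V : Type*} (G : SimpleGraph V) (s t : V) (hst : s ≠ t)
    (hadj : ¬ G.Adj s t) :
    minCycleLengthThroughEdge (G ⊔ SimpleGraph.fromEdgeSet {s(s, t)}) s(s, t)
      = G.edist s t + 1 := by
  classical
  set G' : SimpleGraph V := G ⊔ SimpleGraph.fromEdgeSet {s(s, t)} with hG'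
  have hle : G ≤ G' := le_sup_left
  have hG'adj : G'.Adj s t := by
    refine Or.inr ?_
    rw [SimpleGraph.fromEdgeSet_adj]
    exact ⟨rfl, hst⟩
  have hedge : ∀ {u v : V} (p : G'.Walk u v), s(s, t) ∉ p.edges →
      ∀ e ∈ p.edges, e ∈ G.edgeSet := by
    intro u v p hp e he
    have := p.edges_subset_edgeSet he
    rw [hG', SimpleGraph.edgeSet_sup] at this
    rcases this with h | h
    · exact h
    · rw [SimpleGraph.edgeSet_fromEdgeSet] at h
      rcases h with ⟨h1, _⟩
      simp only [Set.mem_singleton_iff] at h1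
      exact absurd (h1 ▸ he) hp
  apply le_antisymm
  · -- ≤ : build a cycle from a shortest path
    rcases eq_or_ne (G.edist s t) ⊤ with htop | htop
    · rw [htop]; simp
    · obtain ⟨p, hp⟩ := G.exists_walk_of_edist_ne_top htop
      set q : G.Walk s t := p.bypass with hq
      have hqpath : q.IsPath := p.bypass_isPath
      have hqlen : (q.length : ℕ∞) = G.edist s t := by
        refine le_antisymm ?_ (q.edist_le)
        rw [← hp]
        exact_mod_cast p.length_bypass_le
      set r : G'.Walk t s := (q.reverse).mapLe hle with hr
      have hrne : s(s, t) ∉ r.edges := by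
        intro hmem
        have : s(s, t) ∈ q.reverse.edges := by
          rw [hr] at hmem
          simpa [SimpleGraph.Walk.mapLe] using hmem
        exact hadj (q.reverse.adj_of_mem_edges this)
      have hcyc : (SimpleGraph.Walk.cons hG'adj r).IsCycle := by
        rw [SimpleGraph.Walk.cons_isCycle_iff]
        exact ⟨SimpleGraph.Walk.IsPath.mapLe hle hqpath.reverse, hrne⟩
      have hmem : s(s, t) ∈ (SimpleGraph.Walk.cons hG'adj r).edges := by
        simp
      refine le_trans (iInf_le _ s) ?_
      refine le_trans (iInf_le _ (SimpleGraph.Walk.cons hG'adj r)) ?_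
      refine le_trans (iInf_le _ ⟨hcyc, hmem⟩) ?_
      have hrlen : r.length = q.length := by
        simp [hr, SimpleGraph.Walk.mapLe]
      rw [SimpleGraph.Walk.length_cons, hrlen, ← hqlen]
      push_cast
      rfl
  · -- ≥ : every cycle through the edge has length ≥ edist + 1
    refine le_iInf fun a => le_iInf fun w => le_iInf fun ⟨hcyc, hmem⟩ => ?_
    have hs : s ∈ w.support := w.fst_mem_support_of_mem_edges hmem
    set c : G'.Walk s s := w.rotate s hs with hc
    have hccyc : c.IsCycle := hcyc.rotate hs
    have hcmem : s(s, t) ∈ c.edges := (w.rotate_edges s hs).mem_iff.mpr hmem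
    have hclen : c.length = w.length := by
      have := (w.rotate_darts s hs).perm.length_eq
      rw [SimpleGraph.Walk.length_darts, SimpleGraph.Walk.length_darts] at this
      exact this
    have ht : t ∈ c.support := c.snd_mem_support_of_mem_edges hcmem
    set c1 := c.takeUntil t ht with hc1
    set c2 := c.dropUntil t ht with hc2
    have hspec : c1.append c2 = c := c.take_spec ht
    have hedges : c.edges = c1.edges ++ c2.edges := by
      rw [← hspec, SimpleGraph.Walk.edges_append]
    have hnodup : (c1.edges ++ c2.edges).Nodup := by
      rw [← hedges]; exact hccyc.isTrail.edges_nodup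
    have hsum : c1.length + c2.length = c.length := by
      have := congr_arg SimpleGraph.Walk.length hspec
      simpa [SimpleGraph.Walk.length_append] using this
    rw [hedges, List.mem_append] at hcmem
    have key : G.edist s t + 1 ≤ (c.length : ℕ∞) := by
      rcases hcmem with h1 | h2
      · -- edge in c1; c2 : Walk t s avoids it
        have h2 : s(s, t) ∉ c2.edges :=
          fun h => (List.disjoint_of_nodup_append hnodup) h1 h
        have hG2 := hedge c2 h2
        have hdist : G.edist s t ≤ (c2.length : ℕ∞) := by
          rw [SimpleGraph.edist_comm]
          have := (c2.transfer G hG2).edist_le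
          rwa [SimpleGraph.Walk.length_transfer] at this
        have h1pos : 1 ≤ c1.length := by
          have h0 : 0 < c1.edges.length := List.length_pos_iff.mpr (fun h => by simp [h] at h1)
          have := SimpleGraph.Walk.length_edges c1
          omega
        calc G.edist s t + 1 ≤ (c2.length : ℕ∞) + (c1.length : ℕ∞) := by
              exact add_le_add hdist (by exact_mod_cast h1pos)
          _ = (c.length : ℕ∞) := by
              rw [← hsum]; push_cast; ring
      · -- edge in c2; c1 : Walk s t avoids it
        have h1 : s(s, t) ∉ c1.edges :=
          fun h => (List.disjoint_of_nodup_append hnodup) h h2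
        have hG1 := hedge c1 h1
        have hdist : G.edist s t ≤ (c1.length : ℕ∞) := by
          have := (c1.transfer G hG1).edist_le
          rwa [SimpleGraph.Walk.length_transfer] at this
        have h2pos : 1 ≤ c2.length := by
          have h0 : 0 < c2.edges.length := List.length_pos_iff.mpr (fun h => by simp [h] at h2)
          have := SimpleGraph.Walk.length_edges c2
          omega
        calc G.edist s t + 1 ≤ (c1.length : ℕ∞) + (c2.length : ℕ∞) := by
              exact add_le_add hdist (by exact_mod_cast h2pos)
          _ = (c.length : ℕ∞) := by
              rw [← hsum]; push_cast; ring
    rw [hclen] at key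
    exact key
end

section
/- Let G be a simple graph on a vertex type V and let s, t ∈ V with s ≠ t. Define the simple graph G′ on Option V by: some u and some v are adjacent in G′ iff u and v are adjacent in G, and none is adjacent to some u iff u = s or u = t. Then the minimum length of a cycle in G′ passing through the vertex none equals edist_G(s, t) + 2, where edist denotes shortest-path distance in ℕ∞ (∞ for unreachable pairs), the minimum cycle length is the infimum in ℕ∞ over lengths of cycles of G′ whose support contains the vertex none (taking value ∞ if no such cycle exists), and ∞ + 2 = ∞. -/
open SimpleGraph

/-- The minimum length of a cycle of `G` whose support contains the vertex
`v`, as an infimum in `ℕ∞` (so `⊤` if no such cycle exists). -/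
noncomputable def minCycleLengthThroughVertex {V : Type*} (G : SimpleGraph V)
    (v : V) : ℕ∞ :=
  ⨅ (a : V) (w : G.Walk a a) (_ : w.IsCycle ∧ v ∈ w.support), (w.length : ℕ∞)

/-- `G` with one new vertex (`none`) adjacent exactly to `s` and `t`. -/
def addApexVertex {V : Type*} (G : SimpleGraph V) (s t : V) :
    SimpleGraph (Option V) :=
  SimpleGraph.fromRel (fun a b =>
    match a, b with
    | some u, some v => G.Adj u v
    | none, some u => u = s ∨ u = t
    | _, _ => False)

section aux

variable {V : Type*} {G : SimpleGraph V} {s t : V}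

lemma apex_adj_some {u v : V} :
    (addApexVertex G s t).Adj (some u) (some v) ↔ G.Adj u v := by
  simp only [addApexVertex, SimpleGraph.fromRel_adj, ne_eq, Option.some.injEq]
  constructor
  · rintro ⟨h, h2 | h2⟩ <;> [exact h2; exact h2.symm]
  · exact fun h => ⟨h.ne, Or.inl h⟩

lemma apex_adj_none {u : V} :
    (addApexVertex G s t).Adj none (some u) ↔ u = s ∨ u = t := by
  simp [addApexVertex, SimpleGraph.fromRel_adj]

lemma apex_not_adj_none_none : ¬ (addApexVertex G s t).Adj none none := by
  simp

/-- The embedding of `G` into the apex graph. -/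
def apexHom (G : SimpleGraph V) (s t : V) : G →g addApexVertex G s t :=
  ⟨some, fun h => apex_adj_some.mpr h⟩

lemma key {x y : Option V} (p : (addApexVertex G s t).Walk x y) (hp : p.IsPath) :
    ∀ a : V, x = some a → y = none →
      ∃ b, (b = s ∨ b = t) ∧ s(some b, none) ∈ p.edges ∧
        ∃ q : G.Walk a b, q.length + 1 = p.length := by
  induction p with
  | nil => rintro a rfl ⟨⟩
  | @cons x z _ h p ih =>
    rintro a rfl rfl
    cases z with
    | none =>
      have hp' : p = Walk.nil := Walk.isPath_iff_eq_nil.mp hp.of_cons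
      subst hp'
      have ha : a = s ∨ a = t := apex_adj_none.mp h.symm
      exact ⟨a, ha, by simp, Walk.nil, by simp⟩
    | some c =>
      obtain ⟨b, hb, hmem, q, hq⟩ := ih hp.of_cons c rfl rfl
      exact ⟨b, hb, by simp [hmem], Walk.cons (apex_adj_some.mp h) q, by simp [← hq]⟩

lemma cycle_length (c : (addApexVertex G s t).Walk none none) (hc : c.IsCycle)
    (hst : s ≠ t) : G.edist s t + 2 ≤ (c.length : ℕ∞) := by
  cases c with
  | nil => exact absurd rfl hc.ne_nil
  | @cons _ y _ h p =>
    match y with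
    | none => exact absurd h apex_not_adj_none_none
    | some a =>
      rw [Walk.cons_isCycle_iff] at hc
      obtain ⟨b, hb, hmem, q, hq⟩ := key p hc.1 a rfl rfl
      have ha : a = s ∨ a = t := apex_adj_none.mp h
      have hab : a ≠ b := by
        rintro rfl
        exact hc.2 (by rwa [Sym2.eq_swap] at hmem)
      have hd : G.edist s t ≤ (q.length : ℕ∞) := by
        have h0 : G.edist a b ≤ (q.length : ℕ∞) := SimpleGraph.edist_le q
        rcases ha with ha | ha <;> rcases hb with hb | hb
        · exact absurd (ha.trans hb.symm) hab
        · subst ha; subst hb; exact h0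
        · subst ha; subst hb; rw [SimpleGraph.edist_comm]; exact h0
        · exact absurd (ha.trans hb.symm) hab
      have hl : (Walk.cons h p).length = q.length + 2 := by
        simp [← hq]
      rw [hl]
      push_cast
      exact add_le_add_left hd 2

end aux

theorem stmt_14 {V : Type*} (G : SimpleGraph V) (s t : V) (hst : s ≠ t) :
    minCycleLengthThroughVertex (addApexVertex G s t) none
      = G.edist s t + 2 := by
  classical
  refine le_antisymm ?_ ?_
  · -- upper bound
    rcases eq_or_ne (G.edist s t) ⊤ with htop | htop
    · simp [htop]
    obtain ⟨p, hp⟩ := SimpleGraph.exists_walk_of_edist_ne_top htop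
    set r := p.bypass with hr
    have hrpath : r.IsPath := p.bypass_isPath
    have hrlen : (r.length : ℕ∞) ≤ G.edist s t := by
      rw [← hp]
      exact_mod_cast p.length_bypass_le
    -- build the cycle
    have h1 : (addApexVertex G s t).Adj none (some s) := apex_adj_none.mpr (Or.inl rfl)
    have h2 : (addApexVertex G s t).Adj (some t) none :=
      (apex_adj_none.mpr (Or.inr rfl)).symm
    set m : (addApexVertex G s t).Walk (some s) (some t) := r.map (apexHom G s t) with hm
    have hnonem : (none : Option V) ∉ m.support := by
      rw [show m.support = (r.map (apexHom G s t)).support from rfl, Walk.support_map]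
      simp [apexHom]
    set P := m.concat h2 with hP
    have hPpath : P.IsPath := by
      rw [Walk.isPath_def, hP, Walk.support_concat]
      rw [List.nodup_append]
      refine ⟨(Walk.map_isPath_of_injective (fun a b hab => Option.some.inj hab) hrpath).support_nodup,
        List.nodup_singleton _, ?_⟩
      intro x hx
      simp only [List.mem_singleton]
      rintro _ rfl rfl
      exact hnonem hx
    have hPedges : P.edges = m.edges ++ [s(some t, none)] := by
      rw [hP, Walk.edges_concat, List.concat_eq_append]
    have hc : (Walk.cons h1 P).IsCycle := by
      rw [Walk.cons_isCycle_iff]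
      refine ⟨hPpath, ?_⟩
      rw [hPedges]
      simp only [List.mem_append, List.mem_singleton]
      rintro (hmm | hmm)
      · exact hnonem (Walk.fst_mem_support_of_mem_edges m hmm)
      · rw [Sym2.eq_iff] at hmm
        rcases hmm with ⟨h', _⟩ | ⟨_, h'⟩
        · exact nomatch h'
        · exact hst (Option.some_injective V h')
    have hclen : ((Walk.cons h1 P).length : ℕ∞) = (r.length : ℕ∞) + 2 := by
      have : (Walk.cons h1 P).length = r.length + 2 := by
        simp only [Walk.length_cons, hP, Walk.length_concat]
        show (r.map (apexHom G s t)).length + 1 + 1 = r.length + 2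
        rw [Walk.length_map]
      rw [this]; push_cast; ring
    calc minCycleLengthThroughVertex (addApexVertex G s t) none
        ≤ ((Walk.cons h1 P).length : ℕ∞) := by
          refine iInf_le_of_le none (iInf_le_of_le (Walk.cons h1 P)
            (iInf_le_of_le ⟨hc, Walk.start_mem_support _⟩ le_rfl))
      _ = (r.length : ℕ∞) + 2 := hclen
      _ ≤ G.edist s t + 2 := add_le_add_left hrlen 2
  · -- lower bound
    refine le_iInf fun a => le_iInf fun w => le_iInf fun hw => ?_
    obtain ⟨hcyc, hmem⟩ := hw
    have h1 := cycle_length (w.rotate none hmem) (hcyc.rotate hmem) hst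
    have h2 : (w.rotate none hmem).length = w.length := by
      have h3 := (Walk.rotate_darts w none hmem).perm.length_eq
      rwa [Walk.length_darts, Walk.length_darts] at h3
    rwa [h2] at h1
end

section
/- Let n ≥ 1 be a natural number, W a positive integer, and A : Fin n → ℤ with |A(i)| ≤ W for all i. Then the following are equivalent: (1) there exist i, j ∈ Fin n with (i : ℕ) + (j : ℕ) < n and A(i) + A(j) + A(i+j) = 0 (where i+j denotes the element of Fin n with value (i:ℕ)+(j:ℕ)); (2) there exist i, j, k ∈ Fin n with (10·W·i + A(i)) + (10·W·j + A(j)) + (−10·W·k + A(k)) = 0. -/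
theorem stmt_17 (n : ℕ) (hn : 1 ≤ n) (W : ℤ) (hW : 0 < W) (A : Fin n → ℤ)
    (hA : ∀ i : Fin n, |A i| ≤ W) :
    (∃ i j : Fin n, ∃ h : (i : ℕ) + (j : ℕ) < n,
        A i + A j + A ⟨(i : ℕ) + (j : ℕ), h⟩ = 0) ↔
    (∃ i j k : Fin n,
        (10 * W * ((i : ℕ) : ℤ) + A i) + (10 * W * ((j : ℕ) : ℤ) + A j)
          + (-(10 * W * ((k : ℕ) : ℤ)) + A k) = 0) := by
  constructor
  · rintro ⟨i, j, h, hsum⟩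
    refine ⟨i, j, ⟨(i : ℕ) + (j : ℕ), h⟩, ?_⟩
    push_cast
    linarith [hsum]
  · rintro ⟨i, j, k, hsum⟩
    have hi := abs_le.mp (hA i)
    have hj := abs_le.mp (hA j)
    have hk := abs_le.mp (hA k)
    have hkey : 10 * W * (((i : ℕ) : ℤ) + ((j : ℕ) : ℤ) - ((k : ℕ) : ℤ)) = -(A i + A j + A k) := by ring_nf; linarith [hsum]
    have hzero : ((i : ℕ) : ℤ) + ((j : ℕ) : ℤ) - ((k : ℕ) : ℤ) = 0 := by
      by_contra hne
      rcases lt_or_gt_of_ne hne with hlt | hgt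
      · have : ((i : ℕ) : ℤ) + ((j : ℕ) : ℤ) - ((k : ℕ) : ℤ) ≤ -1 := by omega
        nlinarith
      · have : 1 ≤ ((i : ℕ) : ℤ) + ((j : ℕ) : ℤ) - ((k : ℕ) : ℤ) := by omega
        nlinarith
    have heq : (i : ℕ) + (j : ℕ) = (k : ℕ) := by omega
    have hlt : (i : ℕ) + (j : ℕ) < n := heq ▸ k.isLt
    refine ⟨i, j, hlt, ?_⟩
    have : (⟨(i : ℕ) + (j : ℕ), hlt⟩ : Fin n) = k := by
      ext; exact heq
    rw [this]
    have := hkey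
    rw [hzero] at this
    linarith
end
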